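/- arXiv:2410.09165 — 2 statements merged into one kernel-verified Lean document; each statement's English description precedes it below -/
import Mathlib

section
/- Let {x_k} be generated by the TRFD algorithm and assume f is bounded below by f_low. If T ≥ 0 satisfies ψ_{p,Δ_*}(x_k) > ε for k = 0,...,T−1, then T ≤ 16 L_{h,p} max{σ, L_J} c_{p,2}(m) c_{2,p}(n)² (f(x_0) − f_low) / (α(1−α)θ²) · ε^{−2} + ⌈|log₂(4 max{σ, L_J} c_{2,p}(n) / (σ(1−α)θ))|⌉ + log₂(4 L_{h,p} max{σ, L_J} c_{p,2}(m) c_{2,p}(n)² Δ_0 / ((1−α)θ) · ε^{−1}) + 1. In particular, the first index T_g(ε) with ψ_{p,Δ_*}(x_{T_g(ε)}) ≤ ε is finite and satisfies this bound. -/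
set_option maxHeartbeats 1600000

open scoped ENNReal

noncomputable section

/-- The `p`-norm on `ℝ^n`, for `p ∈ [1,∞]`. -/
def pNorm (p : ℝ≥0∞) {n : ℕ} (x : Fin n → ℝ) : ℝ :=
  if p = ∞ then ⨆ i, |x i| else (∑ i, |x i| ^ p.toReal) ^ (1 / p.toReal)

/-- The Euclidean norm on `ℝ^n`. -/
def eucNorm {n : ℕ} (x : Fin n → ℝ) : ℝ := Real.sqrt (∑ i, x i ^ 2)

/-- The operator norm of a matrix, induced by Euclidean norms. -/
def opNorm2 {m n : ℕ} (A : Matrix (Fin m) (Fin n) ℝ) : ℝ :=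
  sSup ((fun v => eucNorm (A.mulVec v)) '' {v | eucNorm v ≤ 1})

/-- Forward finite-difference approximation of the Jacobian of `F` at `x` with stepsize `τ`:
the `j`-th column is `(F (x + τ e_j) - F x) / τ`. -/
def fdMatrix {n m : ℕ} (F : (Fin n → ℝ) → (Fin m → ℝ)) (x : Fin n → ℝ) (τ : ℝ) :
    Matrix (Fin m) (Fin n) ℝ :=
  Matrix.of fun i j => (F (x + Pi.single j τ) i - F x i) / τ

/-- Stationarity measure `ψ_{p,r}(x)`. -/
def psi {n m : ℕ} (Ω : Set (Fin n → ℝ)) (F : (Fin n → ℝ) → (Fin m → ℝ))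
    (h : (Fin m → ℝ) → ℝ) (J : (Fin n → ℝ) → Matrix (Fin m) (Fin n) ℝ)
    (p : ℝ≥0∞) (r : ℝ) (x : Fin n → ℝ) : ℝ :=
  r⁻¹ * (h (F x) -
    sInf ((fun s => h (F x + (J x).mulVec s)) '' {s | x + s ∈ Ω ∧ pNorm p s ≤ r}))

/-- Approximate stationarity measure `η_{p,r}(x; A)`. -/
def eta {n m : ℕ} (Ω : Set (Fin n → ℝ)) (F : (Fin n → ℝ) → (Fin m → ℝ))
    (h : (Fin m → ℝ) → ℝ) (p : ℝ≥0∞) (r : ℝ) (x : Fin n → ℝ)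
    (A : Matrix (Fin m) (Fin n) ℝ) : ℝ :=
  r⁻¹ * (h (F x) -
    sInf ((fun s => h (F x + A.mulVec s)) '' {s | x + s ∈ Ω ∧ pNorm p s ≤ r}))

/-- The TRFD algorithm: `x`, `τ`, `Δ`, `A`, `d`, `ρ` are the iterates, finite-difference
stepsizes, trust-region radii, finite-difference Jacobian approximations, trial steps and
ratios generated by TRFD with parameters `ε, σ, α, θ, Δstar` from the point `x 0`. -/
def TRFDrun {n m : ℕ} (Ω : Set (Fin n → ℝ)) (F : (Fin n → ℝ) → (Fin m → ℝ))
    (h : (Fin m → ℝ) → ℝ) (p : ℝ≥0∞)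
    (Lh cpm cnp ε σ α θ Δstar : ℝ)
    (x : ℕ → Fin n → ℝ) (τ Δ : ℕ → ℝ) (A : ℕ → Matrix (Fin m) (Fin n) ℝ)
    (d : ℕ → Fin n → ℝ) (ρ : ℕ → ℝ) : Prop :=
  x 0 ∈ Ω ∧
  τ 0 = ε / (Lh * σ * cpm * cnp * Real.sqrt n) ∧
  τ 0 * Real.sqrt n ≤ Δ 0 ∧ Δ 0 ≤ Δstar ∧
  (∀ k, A k = fdMatrix F (x k) (τ k)) ∧
  (∀ k,
    -- unsuccessful iteration of type I
    (eta Ω F h p Δstar (x k) (A k) < ε / 2 ∧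
      x (k + 1) = x k ∧ Δ (k + 1) = Δ k ∧ τ (k + 1) = τ k / 2) ∨
    (ε / 2 ≤ eta Ω F h p Δstar (x k) (A k) ∧
      -- the trial step is feasible and achieves a `θ`-fraction of the optimal model decrease
      pNorm p (d k) ≤ Δ k ∧ x k + d k ∈ Ω ∧
      θ * (h (F (x k)) -
          sInf ((fun s => h (F (x k) + (A k).mulVec s)) ''
            {s | x k + s ∈ Ω ∧ pNorm p s ≤ Δ k})) ≤
        h (F (x k)) - h (F (x k) + (A k).mulVec (d k)) ∧
      ρ k = (h (F (x k)) - h (F (x k + d k))) /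
            (h (F (x k)) - h (F (x k) + (A k).mulVec (d k))) ∧
      -- successful iteration
      ((α ≤ ρ k ∧ x (k + 1) = x k + d k ∧ Δ (k + 1) = min (2 * Δ k) Δstar ∧
          τ (k + 1) = τ k) ∨
      -- unsuccessful iteration of type II
       (ρ k < α ∧ τ k * Real.sqrt n ≤ Δ k / 2 ∧
          x (k + 1) = x k ∧ Δ (k + 1) = Δ k / 2 ∧ τ (k + 1) = τ k) ∨
      -- unsuccessful iteration of type III
       (ρ k < α ∧ Δ k / 2 < τ k * Real.sqrt n ∧
          x (k + 1) = x k ∧ Δ (k + 1) = Δ k / 2 ∧ τ (k + 1) = τ k / 2))))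

namespace TRFDAux

/-! ### Basic facts about `eucNorm`, `opNorm2`, `pNorm` -/

variable {n m : ℕ}

lemma eucNorm_eq_norm (v : Fin n → ℝ) :
    eucNorm v = ‖(WithLp.equiv 2 (Fin n → ℝ)).symm v‖ := by
  rw [eucNorm, EuclideanSpace.norm_eq]
  simp [Real.norm_eq_abs, sq_abs]

lemma eucNorm_nonneg (v : Fin n → ℝ) : 0 ≤ eucNorm v := Real.sqrt_nonneg _

/-- The continuous linear map between Euclidean spaces induced by a matrix. -/
def matCLM (B : Matrix (Fin m) (Fin n) ℝ) :
    EuclideanSpace ℝ (Fin n) →L[ℝ] EuclideanSpace ℝ (Fin m) :=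
  LinearMap.toContinuousLinearMap (Matrix.toEuclideanLin B)

lemma matCLM_apply (B : Matrix (Fin m) (Fin n) ℝ) (v : EuclideanSpace ℝ (Fin n)) :
    matCLM B v = (WithLp.equiv 2 (Fin m → ℝ)).symm
      (B.mulVec (WithLp.equiv 2 (Fin n → ℝ) v)) := rfl

lemma opNorm2_eq (B : Matrix (Fin m) (Fin n) ℝ) : opNorm2 B = ‖matCLM B‖ := by
  rw [opNorm2, ← ContinuousLinearMap.sSup_unitClosedBall_eq_norm (matCLM B)]
  congr 1
  have h1 : (fun v : Fin n → ℝ => eucNorm (B.mulVec v))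
      = (fun w : EuclideanSpace ℝ (Fin n) => ‖matCLM B w‖) ∘
        ⇑(WithLp.equiv 2 (Fin n → ℝ)).symm := by
    funext v
    simp [Function.comp, matCLM_apply, eucNorm_eq_norm, Equiv.apply_symm_apply]
  have h2 : {v : Fin n → ℝ | eucNorm v ≤ 1}
      = ⇑(WithLp.equiv 2 (Fin n → ℝ)).symm ⁻¹' (Metric.closedBall 0 1) := by
    ext v
    simp [eucNorm_eq_norm, mem_closedBall_zero_iff]
  rw [h1, h2, Set.image_comp, Equiv.image_preimage]

lemma opNorm2_nonneg (B : Matrix (Fin m) (Fin n) ℝ) : 0 ≤ opNorm2 B := by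
  rw [opNorm2_eq]; exact norm_nonneg _

lemma eucNorm_mulVec_le (B : Matrix (Fin m) (Fin n) ℝ) (v : Fin n → ℝ) :
    eucNorm (B.mulVec v) ≤ opNorm2 B * eucNorm v := by
  rw [opNorm2_eq, eucNorm_eq_norm, eucNorm_eq_norm v]
  have := (matCLM B).le_opNorm ((WithLp.equiv 2 (Fin n → ℝ)).symm v)
  simpa [matCLM_apply, Equiv.apply_symm_apply] using this

lemma matCLM_sub (B C : Matrix (Fin m) (Fin n) ℝ) :
    matCLM (B - C) = matCLM B - matCLM C := by
  unfold matCLM; rw [map_sub]; rfl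

lemma opNorm2_sub_comm (B C : Matrix (Fin m) (Fin n) ℝ) :
    opNorm2 (B - C) = opNorm2 (C - B) := by
  rw [opNorm2_eq, opNorm2_eq, matCLM_sub, matCLM_sub, norm_sub_rev]

lemma eucNorm_add_le (v w : Fin n → ℝ) :
    eucNorm (v + w) ≤ eucNorm v + eucNorm w := by
  rw [eucNorm_eq_norm, eucNorm_eq_norm, eucNorm_eq_norm, WithLp.equiv_symm_apply, WithLp.toLp_add]
  exact norm_add_le _ _

lemma eucNorm_smul (a : ℝ) (v : Fin n → ℝ) :
    eucNorm (a • v) = |a| * eucNorm v := by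
  rw [eucNorm_eq_norm, eucNorm_eq_norm, WithLp.equiv_symm_apply, WithLp.toLp_smul, norm_smul,
    Real.norm_eq_abs]

lemma opNorm2_le (B : Matrix (Fin m) (Fin n) ℝ) (c : ℝ) (hc : 0 ≤ c)
    (hcB : ∀ v, eucNorm (B.mulVec v) ≤ c * eucNorm v) : opNorm2 B ≤ c := by
  apply Real.sSup_le _ hc
  rintro a ⟨v, hv, rfl⟩
  calc eucNorm (B.mulVec v) ≤ c * eucNorm v := hcB v
    _ ≤ c * 1 := mul_le_mul_of_nonneg_left hv hc
    _ = c := mul_one c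

lemma eucNorm_mulVec_le_frob (B : Matrix (Fin m) (Fin n) ℝ) (v : Fin n → ℝ) :
    eucNorm (B.mulVec v) ≤ Real.sqrt (∑ i, ∑ j, B i j ^ 2) * eucNorm v := by
  rw [eucNorm, eucNorm, ← Real.sqrt_mul (by positivity)]
  apply Real.sqrt_le_sqrt
  rw [Finset.sum_mul]
  apply Finset.sum_le_sum
  intro i _
  have := Finset.sum_mul_sq_le_sq_mul_sq Finset.univ (fun j => B i j) v
  simpa [Matrix.mulVec, dotProduct] using this

lemma opNorm2_le_frob (B : Matrix (Fin m) (Fin n) ℝ) :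
    opNorm2 B ≤ Real.sqrt (∑ i, ∑ j, B i j ^ 2) :=
  opNorm2_le B _ (Real.sqrt_nonneg _) (eucNorm_mulVec_le_frob B)

lemma pNorm_nonneg (p : ℝ≥0∞) (x : Fin n → ℝ) : 0 ≤ pNorm p x := by
  rw [pNorm]
  split
  · exact Real.iSup_nonneg fun i => abs_nonneg _
  · positivity

lemma toReal_pos {p : ℝ≥0∞} (hp : 1 ≤ p) (hptop : p ≠ ∞) : 0 < p.toReal := by
  have h1 : (1:ℝ≥0∞).toReal ≤ p.toReal := ENNReal.toReal_mono hptop hp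
  simpa using lt_of_lt_of_le (by norm_num) h1

lemma pNorm_zero {p : ℝ≥0∞} (hp : 1 ≤ p) : pNorm p (0 : Fin n → ℝ) = 0 := by
  rw [pNorm]
  split
  · simp
  · next hptop =>
    have hq := toReal_pos hp hptop
    simp only [abs_zero, Pi.zero_apply, Real.zero_rpow hq.ne', Finset.sum_const_zero]
    rw [Real.zero_rpow (by positivity : (1/p.toReal) ≠ 0)]

lemma pNorm_smul {p : ℝ≥0∞} (hp : 1 ≤ p) (t : ℝ) (ht : 0 ≤ t) (x : Fin n → ℝ) :
    pNorm p (t • x) = t * pNorm p x := by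
  rw [pNorm, pNorm]
  split
  · have : ∀ i, |(t • x) i| = t * |x i| := by
      intro i; simp [abs_mul, abs_of_nonneg ht]
    simp only [this]
    exact (Real.mul_iSup_of_nonneg ht _).symm
  · next hptop =>
    have hq := toReal_pos hp hptop
    have h1 : ∀ i, |(t • x) i| ^ p.toReal = t ^ p.toReal * |x i| ^ p.toReal := by
      intro i
      simp only [Pi.smul_apply, smul_eq_mul, abs_mul, abs_of_nonneg ht]
      exact Real.mul_rpow ht (abs_nonneg _)
    simp only [h1, ← Finset.mul_sum]
    rw [Real.mul_rpow (by positivity) (by positivity), ← Real.rpow_mul ht,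
      mul_one_div_cancel hq.ne', Real.rpow_one]

/-! ### Taylor bound from the Lipschitz Jacobian -/

theorem taylor_aux
    (F : (Fin n → ℝ) → (Fin m → ℝ)) (J : (Fin n → ℝ) → Matrix (Fin m) (Fin n) ℝ)
    (hJ : ∀ y, HasFDerivAt F (LinearMap.toContinuousLinearMap (Matrix.mulVecLin (J y))) y)
    (LJ : ℝ) (hLJ : 0 ≤ LJ)
    (hJLip : ∀ y z, opNorm2 (J y - J z) ≤ LJ * eucNorm (y - z))
    (x u : Fin n → ℝ) :
    eucNorm (F (x + u) - F x - (J x).mulVec u) ≤ LJ / 2 * eucNorm u ^ 2 := by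
  set en : EuclideanSpace ℝ (Fin n) ≃L[ℝ] (Fin n → ℝ) :=
    PiLp.continuousLinearEquiv 2 ℝ (fun _ : Fin n => ℝ) with hen
  set em : EuclideanSpace ℝ (Fin m) ≃L[ℝ] (Fin m → ℝ) :=
    PiLp.continuousLinearEquiv 2 ℝ (fun _ : Fin m => ℝ) with hem
  set G : EuclideanSpace ℝ (Fin n) → EuclideanSpace ℝ (Fin m) :=
    fun y => em.symm (F (en y)) with hG_def
  have hG : ∀ y, HasFDerivAt G (matCLM (J (en y))) y := by
    intro y
    have h2 := (em.symm.hasFDerivAt (x := F (en y))).comp y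
      ((hJ (en y)).comp y (en.hasFDerivAt (x := y)))
    have heq : matCLM (J (en y)) = (em.symm : (Fin m → ℝ) ≃L[ℝ] EuclideanSpace ℝ (Fin m)).toContinuousLinearMap.comp
        ((LinearMap.toContinuousLinearMap (Matrix.mulVecLin (J (en y)))).comp en.toContinuousLinearMap) := by
      ext v i; rfl
    rw [heq]; exact h2
  have heuc : ∀ w : EuclideanSpace ℝ (Fin n), eucNorm (en w) = ‖w‖ := fun w => by
    rw [eucNorm_eq_norm]; rfl
  have key : ∀ (x u : EuclideanSpace ℝ (Fin n)),
      ‖G (x + u) - G x - matCLM (J (en x)) u‖ ≤ LJ / 2 * ‖u‖ ^ 2 := by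
    intro x u
    have hlineder : ∀ t : ℝ, HasDerivAt (fun t : ℝ => x + t • u) u t := by
      intro t
      simpa using ((hasDerivAt_id t).smul_const u).const_add x
    have hf : ∀ t : ℝ, HasDerivAt (fun t : ℝ => G (x + t • u))
        (matCLM (J (en (x + t • u))) u) t := by
      intro t
      exact (hG (x + t • u)).comp_hasDerivAt t (hlineder t)
    have hbnd : ∀ s t : ℝ, ‖matCLM (J (en (x + s • u))) u - matCLM (J (en (x + t • u))) u‖
        ≤ LJ * (|s - t| * ‖u‖) * ‖u‖ := by
      intro s t
      have h1 : matCLM (J (en (x + s • u))) u - matCLM (J (en (x + t • u))) u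
          = (matCLM (J (en (x + s • u)) - J (en (x + t • u)))) u := by
        rw [matCLM_sub]; rfl
      rw [h1]
      calc ‖(matCLM (J (en (x + s • u)) - J (en (x + t • u)))) u‖
          ≤ ‖matCLM (J (en (x + s • u)) - J (en (x + t • u)))‖ * ‖u‖ :=
            ContinuousLinearMap.le_opNorm _ _
        _ ≤ LJ * (|s - t| * ‖u‖) * ‖u‖ := by
            apply mul_le_mul_of_nonneg_right _ (norm_nonneg u)
            rw [← opNorm2_eq]
            have h3 := hJLip (en (x + s • u)) (en (x + t • u))
            have h4 : en (x + s • u) - en (x + t • u) = en ((s - t) • u) := by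
              rw [← map_sub]
              congr 1
              module
            rw [h4, heuc, norm_smul, Real.norm_eq_abs] at h3
            exact h3
    have hlip : LipschitzWith (Real.toNNReal (LJ * ‖u‖ ^ 2))
        (fun t : ℝ => matCLM (J (en (x + t • u))) u) := by
      apply LipschitzWith.of_dist_le_mul
      intro s t
      rw [dist_eq_norm, dist_eq_norm]
      have hnn : 0 ≤ LJ * ‖u‖ ^ 2 := by positivity
      rw [Real.coe_toNNReal _ hnn]
      calc ‖matCLM (J (en (x + s • u))) u - matCLM (J (en (x + t • u))) u‖
          ≤ LJ * (|s - t| * ‖u‖) * ‖u‖ := hbnd s t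
        _ = LJ * ‖u‖ ^ 2 * ‖s - t‖ := by rw [Real.norm_eq_abs]; ring
    have hint : IntervalIntegrable (fun t : ℝ => matCLM (J (en (x + t • u))) u)
        MeasureTheory.volume 0 1 := hlip.continuous.intervalIntegrable _ _
    have hftc := intervalIntegral.integral_eq_sub_of_hasDerivAt
      (f := fun t : ℝ => G (x + t • u)) (fun t _ => hf t) hint
    have hsub : G (x + u) - G x - matCLM (J (en x)) u
        = ∫ t in (0:ℝ)..1, (matCLM (J (en (x + t • u))) u - matCLM (J (en x)) u) := by
      rw [intervalIntegral.integral_sub hint intervalIntegrable_const, hftc,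
        intervalIntegral.integral_const]
      simp
    rw [hsub]
    have hmono : ∀ᵐ t ∂(MeasureTheory.volume.restrict (Set.uIoc (0:ℝ) 1)),
        ‖matCLM (J (en (x + t • u))) u - matCLM (J (en x)) u‖ ≤ LJ * ‖u‖ ^ 2 * t := by
      filter_upwards [MeasureTheory.ae_restrict_mem measurableSet_uIoc] with t ht
      rw [Set.uIoc_of_le (zero_le_one)] at ht
      have h0 : matCLM (J (en x)) u = matCLM (J (en (x + (0:ℝ) • u))) u := by
        norm_num
      rw [h0]
      calc ‖matCLM (J (en (x + t • u))) u - matCLM (J (en (x + (0:ℝ) • u))) u‖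
          ≤ LJ * (|t - 0| * ‖u‖) * ‖u‖ := hbnd t 0
        _ = LJ * ‖u‖ ^ 2 * |t| := by ring
        _ = LJ * ‖u‖ ^ 2 * t := by rw [abs_of_pos ht.1]
    calc ‖∫ t in (0:ℝ)..1, (matCLM (J (en (x + t • u))) u - matCLM (J (en x)) u)‖
        ≤ |∫ t in (0:ℝ)..1, LJ * ‖u‖ ^ 2 * t| :=
          intervalIntegral.norm_integral_le_abs_of_norm_le hmono
            (by apply Continuous.intervalIntegrable; continuity)
      _ = LJ / 2 * ‖u‖ ^ 2 := by
          rw [intervalIntegral.integral_const_mul, integral_id]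
          rw [abs_of_nonneg (by positivity)]
          ring
  have hkey := key ((WithLp.equiv 2 (Fin n → ℝ)).symm x) ((WithLp.equiv 2 (Fin n → ℝ)).symm u)
  rw [eucNorm_eq_norm, eucNorm_eq_norm u]
  exact hkey

/-! ### Finite-difference error bound -/

lemma fd_error (F : (Fin n → ℝ) → (Fin m → ℝ))
    (J : (Fin n → ℝ) → Matrix (Fin m) (Fin n) ℝ) (LJ : ℝ) (hLJ : 0 ≤ LJ)
    (htaylor : ∀ x u, eucNorm (F (x + u) - F x - (J x).mulVec u) ≤ LJ / 2 * eucNorm u ^ 2)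
    (x : Fin n → ℝ) {τ : ℝ} (hτ : 0 < τ) :
    opNorm2 (fdMatrix F x τ - J x) ≤ Real.sqrt n * (LJ / 2 * τ) := by
  refine (opNorm2_le_frob _).trans ?_
  rw [Finset.sum_comm]
  have hcol : ∀ j : Fin n, (∑ i, ((fdMatrix F x τ - J x) i j) ^ 2) ≤ (LJ / 2 * τ) ^ 2 := by
    intro j
    have hw : (fun i => (fdMatrix F x τ - J x) i j)
        = τ⁻¹ • (F (x + Pi.single j τ) - F x - (J x).mulVec (Pi.single j τ)) := by
      funext i
      have hmv : ((J x).mulVec (Pi.single j τ)) i = J x i j * τ := by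
        simp [Matrix.mulVec, dotProduct, Pi.single_apply]
      simp only [fdMatrix, Matrix.sub_apply, Matrix.of_apply, Pi.smul_apply, Pi.sub_apply,
        smul_eq_mul, hmv]
      field_simp
    have h4 : eucNorm (Pi.single j τ : Fin n → ℝ) = τ := by
      rw [eucNorm]
      have : ∑ i, (Pi.single j τ : Fin n → ℝ) i ^ 2 = τ ^ 2 := by
        simp [Pi.single_apply]
      rw [this, Real.sqrt_sq hτ.le]
    have h2 : eucNorm (fun i => (fdMatrix F x τ - J x) i j) ≤ LJ / 2 * τ := by
      rw [hw, eucNorm_smul]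
      have h3 := htaylor x (Pi.single j τ)
      rw [h4] at h3
      calc |τ⁻¹| * eucNorm (F (x + Pi.single j τ) - F x - (J x).mulVec (Pi.single j τ))
          ≤ τ⁻¹ * (LJ / 2 * τ ^ 2) := by
            rw [abs_of_pos (inv_pos.2 hτ)]
            exact mul_le_mul_of_nonneg_left h3 (inv_pos.2 hτ).le
        _ = LJ / 2 * τ := by field_simp
    calc (∑ i, ((fdMatrix F x τ - J x) i j) ^ 2)
        = eucNorm (fun i => (fdMatrix F x τ - J x) i j) ^ 2 := by
          rw [eucNorm, Real.sq_sqrt (by positivity)]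
      _ ≤ (LJ / 2 * τ) ^ 2 := pow_le_pow_left₀ (eucNorm_nonneg _) h2 2
  calc Real.sqrt (∑ j : Fin n, ∑ i, ((fdMatrix F x τ - J x) i j) ^ 2)
      ≤ Real.sqrt (∑ _j : Fin n, (LJ / 2 * τ) ^ 2) :=
        Real.sqrt_le_sqrt (Finset.sum_le_sum fun j _ => hcol j)
    _ = Real.sqrt n * (LJ / 2 * τ) := by
        rw [Finset.sum_const, Finset.card_univ, Fintype.card_fin, nsmul_eq_mul,
          Real.sqrt_mul (by positivity), Real.sqrt_sq (by positivity)]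

/-! ### Trust-region subproblem -/

/-- The feasible set of the trust-region subproblem. -/
def modelSet {n : ℕ} (Ω : Set (Fin n → ℝ)) (p : ℝ≥0∞) (x : Fin n → ℝ) (r : ℝ) :
    Set (Fin n → ℝ) := {s | x + s ∈ Ω ∧ pNorm p s ≤ r}

/-- The optimal value of the trust-region subproblem with model matrix `B`. -/
def modelInf {n m : ℕ} (Ω : Set (Fin n → ℝ)) (F : (Fin n → ℝ) → (Fin m → ℝ))
    (h : (Fin m → ℝ) → ℝ) (p : ℝ≥0∞) (B : Matrix (Fin m) (Fin n) ℝ)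
    (x : Fin n → ℝ) (r : ℝ) : ℝ :=
  sInf ((fun s => h (F x + B.mulVec s)) '' {s | x + s ∈ Ω ∧ pNorm p s ≤ r})

/-- Hypotheses relating `h`, `pNorm`, `eucNorm` that we carry around. -/
structure Hyp {n m : ℕ} (Ω : Set (Fin n → ℝ)) (F : (Fin n → ℝ) → (Fin m → ℝ))
    (h : (Fin m → ℝ) → ℝ) (p : ℝ≥0∞) (Lh cpm cnp : ℝ) : Prop where
  hp : 1 ≤ p
  hLh : 0 < Lh
  hcpm0 : 0 ≤ cpm
  hcnp0 : 0 ≤ cnp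
  hhLip : ∀ z w, |h z - h w| ≤ Lh * pNorm p (z - w)
  hcnp : ∀ v : Fin n → ℝ, eucNorm v ≤ cnp * pNorm p v
  hcpm : ∀ z : Fin m → ℝ, pNorm p z ≤ cpm * eucNorm z

namespace Hyp

variable {n m : ℕ} {Ω : Set (Fin n → ℝ)} {F : (Fin n → ℝ) → (Fin m → ℝ)}
  {h : (Fin m → ℝ) → ℝ} {p : ℝ≥0∞} {Lh cpm cnp : ℝ}
  (H : Hyp Ω F h p Lh cpm cnp)

include H

lemma zero_mem_modelSet {x : Fin n → ℝ} (hx : x ∈ Ω) {r : ℝ} (hr : 0 ≤ r) :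
    (0 : Fin n → ℝ) ∈ modelSet Ω p x r := by
  constructor
  · simpa using hx
  · rw [pNorm_zero H.hp]; exact hr

/-- Lipschitz-type bound on model values over the feasible set. -/
lemma model_val_bound (B : Matrix (Fin m) (Fin n) ℝ) {x s : Fin n → ℝ} {r : ℝ}
    (hs : s ∈ modelSet Ω p x r) :
    |h (F x + B.mulVec s) - h (F x)| ≤ Lh * (cpm * (opNorm2 B * (cnp * r))) := by
  have h1 := H.hhLip (F x + B.mulVec s) (F x)
  rw [add_sub_cancel_left] at h1
  refine h1.trans (mul_le_mul_of_nonneg_left ?_ H.hLh.le)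
  refine (H.hcpm _).trans (mul_le_mul_of_nonneg_left ?_ H.hcpm0)
  refine (eucNorm_mulVec_le B s).trans
    (mul_le_mul_of_nonneg_left ?_ (opNorm2_nonneg B))
  refine (H.hcnp s).trans (mul_le_mul_of_nonneg_left ?_ H.hcnp0)
  exact hs.2

lemma modelInf_bddBelow (B : Matrix (Fin m) (Fin n) ℝ) (x : Fin n → ℝ) (r : ℝ) :
    BddBelow ((fun s => h (F x + B.mulVec s)) '' {s | x + s ∈ Ω ∧ pNorm p s ≤ r}) := by
  refine ⟨h (F x) - Lh * (cpm * (opNorm2 B * (cnp * r))), ?_⟩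
  rintro a ⟨s, hs, rfl⟩
  have h0 := H.model_val_bound B (hs : s ∈ modelSet Ω p x r)
  have h1 := abs_le.1 h0
  have := h1.1
  simp only [neg_le_sub_iff_le_add] at this
  linarith

lemma modelInf_le_base {x : Fin n → ℝ} (hx : x ∈ Ω) {r : ℝ} (hr : 0 ≤ r)
    (B : Matrix (Fin m) (Fin n) ℝ) :
    modelInf Ω F h p B x r ≤ h (F x) := by
  apply csInf_le (H.modelInf_bddBelow B x r)
  exact ⟨0, H.zero_mem_modelSet hx hr, by simp [Matrix.mulVec_zero]⟩

lemma modelInf_compare {x : Fin n → ℝ} (hx : x ∈ Ω) {r : ℝ} (hr : 0 ≤ r)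
    (B B' : Matrix (Fin m) (Fin n) ℝ) :
    modelInf Ω F h p B' x r - Lh * (cpm * (opNorm2 (B - B') * (cnp * r)))
      ≤ modelInf Ω F h p B x r := by
  apply le_csInf (⟨_, Set.mem_image_of_mem _ (H.zero_mem_modelSet hx hr)⟩)
  rintro a ⟨s, hs, rfl⟩
  have h1 : |h (F x + B.mulVec s) - h (F x + B'.mulVec s)|
      ≤ Lh * (cpm * (opNorm2 (B - B') * (cnp * r))) := by
    have h2 := H.hhLip (F x + B.mulVec s) (F x + B'.mulVec s)
    have h3 : F x + B.mulVec s - (F x + B'.mulVec s) = (B - B').mulVec s := by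
      rw [Matrix.sub_mulVec]; abel
    rw [h3] at h2
    refine h2.trans (mul_le_mul_of_nonneg_left ?_ H.hLh.le)
    refine (H.hcpm _).trans (mul_le_mul_of_nonneg_left ?_ H.hcpm0)
    refine (eucNorm_mulVec_le _ s).trans
      (mul_le_mul_of_nonneg_left ?_ (opNorm2_nonneg _))
    refine (H.hcnp s).trans (mul_le_mul_of_nonneg_left hs.2 H.hcnp0)
  have h4 : modelInf Ω F h p B' x r ≤ h (F x + B'.mulVec s) :=
    csInf_le (H.modelInf_bddBelow B' x r) (Set.mem_image_of_mem _ hs)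
  have := abs_le.1 h1
  simp only []
  linarith [this.1]

lemma modelInf_scaling (hΩcv : Convex ℝ Ω) (hconv : ConvexOn ℝ Set.univ h)
    {x : Fin n → ℝ} (hx : x ∈ Ω) {Δ r : ℝ} (hΔ : 0 < Δ) (hΔr : Δ ≤ r)
    (B : Matrix (Fin m) (Fin n) ℝ) :
    (Δ / r) * (h (F x) - modelInf Ω F h p B x r)
      ≤ h (F x) - modelInf Ω F h p B x Δ := by
  have hr : 0 < r := lt_of_lt_of_le hΔ hΔr
  set t := Δ / r with htdef
  have ht0 : 0 < t := div_pos hΔ hr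
  have ht1 : t ≤ 1 := (div_le_one hr).2 hΔr
  have key : ∀ s ∈ {s : Fin n → ℝ | x + s ∈ Ω ∧ pNorm p s ≤ r},
      modelInf Ω F h p B x Δ ≤ (1 - t) * h (F x) + t * h (F x + B.mulVec s) := by
    intro s hs
    have hmem : t • s ∈ modelSet Ω p x Δ := by
      constructor
      · have := hΩcv hx hs.1 (by linarith : (0:ℝ) ≤ 1 - t) ht0.le (by ring)
        have heq : (1 - t) • x + t • (x + s) = x + t • s := by module
        rwa [heq] at this
      · rw [pNorm_smul H.hp t ht0.le]
        calc t * pNorm p s ≤ t * r :=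
          mul_le_mul_of_nonneg_left hs.2 ht0.le
        _ = Δ := div_mul_cancel₀ Δ hr.ne'
    have h5 : modelInf Ω F h p B x Δ ≤ h (F x + B.mulVec (t • s)) :=
      csInf_le (H.modelInf_bddBelow B x Δ) (Set.mem_image_of_mem _ hmem)
    refine h5.trans ?_
    have h6 : F x + B.mulVec (t • s) = (1 - t) • F x + t • (F x + B.mulVec s) := by
      rw [Matrix.mulVec_smul]; module
    rw [h6]
    have := hconv.2 (Set.mem_univ (F x)) (Set.mem_univ (F x + B.mulVec s))
      (by linarith : (0:ℝ) ≤ 1 - t) ht0.le (by ring)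
    simpa using this
  have h7 : (modelInf Ω F h p B x Δ - (1 - t) * h (F x)) / t ≤ modelInf Ω F h p B x r := by
    apply le_csInf (⟨_, Set.mem_image_of_mem _ (H.zero_mem_modelSet hx hr.le)⟩)
    rintro a ⟨s, hs, rfl⟩
    rw [div_le_iff₀ ht0]
    have := key s hs
    simp only []
    linarith
  rw [div_le_iff₀ ht0] at h7
  nlinarith [h7]

end Hyp

lemma eta_eq {n m : ℕ} (Ω : Set (Fin n → ℝ)) (F : (Fin n → ℝ) → (Fin m → ℝ))
    (h : (Fin m → ℝ) → ℝ) (p : ℝ≥0∞) (r : ℝ) (x : Fin n → ℝ)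
    (B : Matrix (Fin m) (Fin n) ℝ) :
    eta Ω F h p r x B = r⁻¹ * (h (F x) - modelInf Ω F h p B x r) := rfl

lemma psi_eq {n m : ℕ} (Ω : Set (Fin n → ℝ)) (F : (Fin n → ℝ) → (Fin m → ℝ))
    (h : (Fin m → ℝ) → ℝ) (J : (Fin n → ℝ) → Matrix (Fin m) (Fin n) ℝ)
    (p : ℝ≥0∞) (r : ℝ) (x : Fin n → ℝ) :
    psi Ω F h J p r x = r⁻¹ * (h (F x) - modelInf Ω F h p (J x) x r) := rfl

lemma count_succ (P : ℕ → Prop) [DecidablePred P] (K : ℕ) :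
    ((Finset.range (K+1)).filter P).card
      = ((Finset.range K).filter P).card + (if P K then 1 else 0) := by
  rw [Finset.range_add_one, Finset.filter_insert]
  split
  · rw [Finset.card_insert_of_notMem
      (fun hmem => absurd (Finset.mem_of_mem_filter _ hmem) (Finset.notMem_range_self))]
  · rw [add_zero]

end TRFDAux
open TRFDAux in
/-- Theorem 3.8: iteration complexity of TRFD for nonconvex problems. -/
theorem stmt13
    {n m : ℕ} (hn : 1 ≤ n) (hm : 1 ≤ m) (p : ℝ≥0∞) (hp : 1 ≤ p)
    (Ω : Set (Fin n → ℝ)) (hΩne : Ω.Nonempty) (hΩcl : IsClosed Ω) (hΩcv : Convex ℝ Ω)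
    (F : (Fin n → ℝ) → (Fin m → ℝ)) (J : (Fin n → ℝ) → Matrix (Fin m) (Fin n) ℝ)
    (hJ : ∀ y, HasFDerivAt F (LinearMap.toContinuousLinearMap (Matrix.mulVecLin (J y))) y)
    (LJ : ℝ) (hLJ : 0 < LJ)
    (hJLip : ∀ y z, opNorm2 (J y - J z) ≤ LJ * eucNorm (y - z))
    (h : (Fin m → ℝ) → ℝ) (hconv : ConvexOn ℝ Set.univ h)
    (Lh : ℝ) (hLh : 0 < Lh)
    (hhLip : ∀ z w, |h z - h w| ≤ Lh * pNorm p (z - w))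
    (cnp cpm : ℝ) (hcnp1 : 1 ≤ cnp) (hcpm1 : 1 ≤ cpm)
    (hcnp : ∀ v : Fin n → ℝ, eucNorm v ≤ cnp * pNorm p v)
    (hcpm : ∀ z : Fin m → ℝ, pNorm p z ≤ cpm * eucNorm z)
    (ε σ α θ Δstar : ℝ) (hε : 0 < ε) (hσ : 0 < σ)
    (hα0 : 0 < α) (hα1 : α < 1) (hθ0 : 0 < θ) (hθ1 : θ ≤ 1)
    (x : ℕ → Fin n → ℝ) (τ Δ : ℕ → ℝ) (A : ℕ → Matrix (Fin m) (Fin n) ℝ)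
    (d : ℕ → Fin n → ℝ) (ρ : ℕ → ℝ)
    (hrun : TRFDrun Ω F h p Lh cpm cnp ε σ α θ Δstar x τ Δ A d ρ)
    (flow : ℝ) (hflow : ∀ y, flow ≤ h (F y))
    (T : ℕ) (hT : ∀ k < T, ε < psi Ω F h J p Δstar (x k)) :
    (T : ℝ) ≤
      16 * Lh * max σ LJ * cpm * cnp ^ 2 * (h (F (x 0)) - flow) /
        (α * (1 - α) * θ ^ 2) / ε ^ 2 +
      (⌈|Real.logb 2 (4 * max σ LJ * cnp / (σ * (1 - α) * θ))|⌉ : ℝ) +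
      Real.logb 2 (4 * Lh * max σ LJ * cpm * cnp ^ 2 * Δ 0 / ((1 - α) * θ) / ε) + 1 := by
  classical
  obtain ⟨hx0, hτ0, hΔ0l, hΔ0u, hA, hstep⟩ := hrun
  have hα1' : (0:ℝ) < 1 - α := by linarith
  set M : ℝ := max σ LJ with hM
  have hσM : σ ≤ M := le_max_left _ _
  have hLJM : LJ ≤ M := le_max_right _ _
  have hM0 : 0 < M := lt_of_lt_of_le hσ hσM
  have hcnp0 : (0:ℝ) < cnp := lt_of_lt_of_le one_pos hcnp1
  have hcpm0 : (0:ℝ) < cpm := lt_of_lt_of_le one_pos hcpm1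
  have hsn : (1:ℝ) ≤ Real.sqrt n := by
    rw [show (1:ℝ) = Real.sqrt 1 by simp]
    exact Real.sqrt_le_sqrt (by exact_mod_cast hn)
  have hsn0 : (0:ℝ) < Real.sqrt n := lt_of_lt_of_le one_pos hsn
  set C : ℝ := Lh * M * cpm * cnp ^ 2 with hC
  have hC0 : 0 < C := by positivity
  set Δb : ℝ := (1 - α) * θ * ε / (2 * C) with hΔb
  have hΔb0 : 0 < Δb := by positivity
  set δs : ℝ := α * (1 - α) * θ ^ 2 * ε ^ 2 / (8 * C) with hδs
  have hδs0 : 0 < δs := by positivity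
  have H : TRFDAux.Hyp Ω F h p Lh cpm cnp := ⟨hp, hLh, hcpm0.le, hcnp0.le, hhLip, hcnp, hcpm⟩
  have hτ00 : 0 < τ 0 := by rw [hτ0]; positivity
  have hΔ00 : 0 < Δ 0 := lt_of_lt_of_le (mul_pos hτ00 hsn0) hΔ0l
  have hΔs0 : 0 < Δstar := lt_of_lt_of_le hΔ00 hΔ0u
  have htaylor := TRFDAux.taylor_aux F J hJ LJ hLJ.le hJLip
  -- predicates classifying the iterations
  set P1 : ℕ → Prop := fun k => eta Ω F h p Δstar (x k) (A k) < ε / 2 with hP1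
  set PS : ℕ → Prop := fun k => ¬ P1 k ∧ α ≤ ρ k with hPS
  set P2 : ℕ → Prop := fun k => ¬ P1 k ∧ ρ k < α ∧ τ k * Real.sqrt n ≤ Δ k / 2 with hP2
  set P3 : ℕ → Prop := fun k => ¬ P1 k ∧ ρ k < α ∧ Δ k / 2 < τ k * Real.sqrt n with hP3
  -- consolidated step description
  have hstep' : ∀ k,
      (P1 k ∧ x (k+1) = x k ∧ Δ (k+1) = Δ k ∧ τ (k+1) = τ k / 2) ∨
      (PS k ∧ x (k+1) = x k + d k ∧ Δ (k+1) = min (2 * Δ k) Δstar ∧ τ (k+1) = τ k) ∨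
      (P2 k ∧ x (k+1) = x k ∧ Δ (k+1) = Δ k / 2 ∧ τ (k+1) = τ k) ∨
      (P3 k ∧ x (k+1) = x k ∧ Δ (k+1) = Δ k / 2 ∧ τ (k+1) = τ k / 2) := by
    intro k
    rcases hstep k with ⟨hη, hx', hΔ', hτ'⟩ | ⟨hη, hdp, hdf, hθc, hρe, hbr⟩
    · exact Or.inl ⟨hη, hx', hΔ', hτ'⟩
    · have hnP1 : ¬ P1 k := fun hh =>
        absurd (hh : eta Ω F h p Δstar (x k) (A k) < ε / 2) (not_lt.2 hη)
      rcases hbr with ⟨hρα, hx', hΔ', hτ'⟩ | ⟨hρα, hτh, hx', hΔ', hτ'⟩ |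
        ⟨hρα, hτb, hx', hΔ', hτ'⟩
      · exact Or.inr (Or.inl ⟨⟨hnP1, hρα⟩, hx', hΔ', hτ'⟩)
      · exact Or.inr (Or.inr (Or.inl ⟨⟨hnP1, hρα, hτh⟩, hx', hΔ', hτ'⟩))
      · exact Or.inr (Or.inr (Or.inr ⟨⟨hnP1, hρα, hτb⟩, hx', hΔ', hτ'⟩))
  -- data available on non-type-I iterations
  have hbr2 : ∀ k, ¬ P1 k →
      pNorm p (d k) ≤ Δ k ∧ x k + d k ∈ Ω ∧
      θ * (h (F (x k)) - TRFDAux.modelInf Ω F h p (A k) (x k) (Δ k)) ≤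
        h (F (x k)) - h (F (x k) + (A k).mulVec (d k)) ∧
      ρ k = (h (F (x k)) - h (F (x k + d k))) /
        (h (F (x k)) - h (F (x k) + (A k).mulVec (d k))) ∧
      ε / 2 ≤ eta Ω F h p Δstar (x k) (A k) := by
    intro k hk
    rcases hstep k with ⟨hη, _, _, _⟩ | ⟨hη, hdp, hdf, hθc, hρe, _⟩
    · exact absurd (show P1 k from hη) hk
    · exact ⟨hdp, hdf, hθc, hρe, hη⟩
  -- invariants
  have hinv : ∀ k, x k ∈ Ω ∧ 0 < τ k ∧ τ k * Real.sqrt n ≤ Δ k ∧ Δ k ≤ Δstar := by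
    intro k
    induction k with
    | zero => exact ⟨hx0, hτ00, hΔ0l, hΔ0u⟩
    | succ k ih =>
      obtain ⟨hxΩ, hτk, hτΔ, hΔs⟩ := ih
      have hτn0 : 0 < τ k * Real.sqrt n := mul_pos hτk hsn0
      have hΔk0 : 0 < Δ k := lt_of_lt_of_le hτn0 hτΔ
      rcases hstep' k with ⟨hk, hx', hΔ', hτ'⟩ | ⟨⟨hnp1, hρα⟩, hx', hΔ', hτ'⟩ |
        ⟨⟨hnp1, hρα, hτh⟩, hx', hΔ', hτ'⟩ | ⟨⟨hnp1, hρα, hτb⟩, hx', hΔ', hτ'⟩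
      · refine ⟨by rw [hx']; exact hxΩ, by rw [hτ']; linarith, ?_, by rw [hΔ']; exact hΔs⟩
        rw [hτ', hΔ']
        have : τ k / 2 * Real.sqrt n = τ k * Real.sqrt n / 2 := by ring
        rw [this]; linarith
      · refine ⟨by rw [hx']; exact (hbr2 k hnp1).2.1, by rw [hτ']; exact hτk, ?_, ?_⟩
        · rw [hτ', hΔ']
          exact le_min (by linarith) (le_trans hτΔ hΔs)
        · rw [hΔ']; exact min_le_right _ _
      · refine ⟨by rw [hx']; exact hxΩ, by rw [hτ']; exact hτk, ?_, by rw [hΔ']; linarith⟩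
        rw [hτ', hΔ']; exact hτh
      · refine ⟨by rw [hx']; exact hxΩ, by rw [hτ']; linarith, ?_, by rw [hΔ']; linarith⟩
        rw [hτ', hΔ']
        have : τ k / 2 * Real.sqrt n = τ k * Real.sqrt n / 2 := by ring
        rw [this]; linarith
  have hΔpos : ∀ k, 0 < Δ k := fun k =>
    lt_of_lt_of_le (mul_pos (hinv k).2.1 hsn0) (hinv k).2.2.1
  -- predicted decrease lower bound
  have hpred : ∀ k, ¬ P1 k →
      θ * (ε / 2) * Δ k ≤ h (F (x k)) - h (F (x k) + (A k).mulVec (d k)) := by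
    intro k hk
    obtain ⟨hdp, hdf, hθc, hρe, hη⟩ := hbr2 k hk
    obtain ⟨hxΩ, hτk, hτΔ, hΔs⟩ := hinv k
    have hΔk0 : 0 < Δ k := hΔpos k
    rw [TRFDAux.eta_eq] at hη
    have hDge : Δstar * (ε / 2) ≤
        h (F (x k)) - TRFDAux.modelInf Ω F h p (A k) (x k) Δstar := by
      have h1 := mul_le_mul_of_nonneg_left hη hΔs0.le
      rw [← mul_assoc, mul_inv_cancel₀ hΔs0.ne', one_mul] at h1
      exact h1
    calc θ * (ε / 2) * Δ k = θ * (Δ k * (ε / 2)) := by ring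
      _ ≤ θ * (h (F (x k)) - TRFDAux.modelInf Ω F h p (A k) (x k) (Δ k)) := by
          apply mul_le_mul_of_nonneg_left _ hθ0.le
          calc Δ k * (ε / 2) = (Δ k / Δstar) * (Δstar * (ε / 2)) := by
                field_simp
            _ ≤ (Δ k / Δstar) *
                (h (F (x k)) - TRFDAux.modelInf Ω F h p (A k) (x k) Δstar) :=
                mul_le_mul_of_nonneg_left hDge (by positivity)
            _ ≤ _ := H.modelInf_scaling hΩcv hconv hxΩ hΔk0 hΔs (A k)
      _ ≤ _ := hθc
  -- gap between model and true values at the trial point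
  have hgap : ∀ k, ¬ P1 k →
      h (F (x k + d k)) - h (F (x k) + (A k).mulVec (d k)) ≤ C * Δ k ^ 2 := by
    intro k hk
    obtain ⟨hdp, hdf, hθc, hρe, hη⟩ := hbr2 k hk
    obtain ⟨hxΩ, hτk, hτΔ, hΔs⟩ := hinv k
    have hΔk0 : 0 < Δ k := hΔpos k
    have hd2 : eucNorm (d k) ≤ cnp * Δ k :=
      (hcnp (d k)).trans (mul_le_mul_of_nonneg_left hdp hcnp0.le)
    have hEk : opNorm2 (A k - J (x k)) ≤ LJ / 2 * Δ k := by
      have h0 := TRFDAux.fd_error F J LJ hLJ.le htaylor (x k) hτk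
      rw [← hA k] at h0
      refine h0.trans ?_
      calc Real.sqrt n * (LJ / 2 * τ k) = LJ / 2 * (τ k * Real.sqrt n) := by ring
        _ ≤ LJ / 2 * Δ k := mul_le_mul_of_nonneg_left hτΔ (by positivity)
    have he1 : eucNorm (F (x k + d k) - F (x k) - (J (x k)).mulVec (d k))
        ≤ LJ / 2 * (cnp * Δ k) ^ 2 := by
      refine (htaylor (x k) (d k)).trans ?_
      exact mul_le_mul_of_nonneg_left
        (pow_le_pow_left₀ (eucNorm_nonneg _) hd2 2) (by positivity)
    have he2 : eucNorm ((J (x k) - A k).mulVec (d k)) ≤ (LJ / 2 * Δ k) * (cnp * Δ k) := by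
      refine (eucNorm_mulVec_le _ _).trans ?_
      rw [opNorm2_sub_comm]
      exact mul_le_mul hEk hd2 (eucNorm_nonneg _) (by positivity)
    have hsplit : F (x k + d k) - (F (x k) + (A k).mulVec (d k))
        = (F (x k + d k) - F (x k) - (J (x k)).mulVec (d k))
          + ((J (x k) - A k).mulVec (d k)) := by
      rw [Matrix.sub_mulVec]; abel
    have hps : pNorm p (F (x k + d k) - (F (x k) + (A k).mulVec (d k)))
        ≤ cpm * (LJ / 2 * (cnp * Δ k) ^ 2 + (LJ / 2 * Δ k) * (cnp * Δ k)) := by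
      refine (hcpm _).trans (mul_le_mul_of_nonneg_left ?_ hcpm0.le)
      rw [hsplit]
      exact (eucNorm_add_le _ _).trans (add_le_add he1 he2)
    have hsmall : LJ * (cnp ^ 2 + cnp) ≤ 2 * M * cnp ^ 2 := by
      have b1 : cnp ≤ cnp ^ 2 := by nlinarith
      have a1 : LJ * cnp ^ 2 ≤ M * cnp ^ 2 :=
        mul_le_mul_of_nonneg_right hLJM (by positivity)
      have a2 : LJ * cnp ≤ M * cnp ^ 2 :=
        le_trans (mul_le_mul_of_nonneg_right hLJM hcnp0.le)
          (mul_le_mul_of_nonneg_left b1 hM0.le)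
      linarith
    calc h (F (x k + d k)) - h (F (x k) + (A k).mulVec (d k))
        ≤ |h (F (x k + d k)) - h (F (x k) + (A k).mulVec (d k))| := le_abs_self _
      _ ≤ Lh * pNorm p (F (x k + d k) - (F (x k) + (A k).mulVec (d k))) := hhLip _ _
      _ ≤ Lh * (cpm * (LJ / 2 * (cnp * Δ k) ^ 2 + (LJ / 2 * Δ k) * (cnp * Δ k))) :=
          mul_le_mul_of_nonneg_left hps hLh.le
      _ = (Lh * cpm * Δ k ^ 2 / 2) * (LJ * (cnp ^ 2 + cnp)) := by ring
      _ ≤ (Lh * cpm * Δ k ^ 2 / 2) * (2 * M * cnp ^ 2) :=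
          mul_le_mul_of_nonneg_left hsmall (by positivity)
      _ = C * Δ k ^ 2 := by rw [hC]; ring
  -- critical radius: small radius forces a successful step
  have hcrit : ∀ k, ¬ P1 k → Δ k ≤ Δb → α ≤ ρ k := by
    intro k hk hΔkb
    obtain ⟨hdp, hdf, hθc, hρe, hη⟩ := hbr2 k hk
    have hΔk0 : 0 < Δ k := hΔpos k
    have hpredk := hpred k hk
    have hpred0 : 0 < h (F (x k)) - h (F (x k) + (A k).mulVec (d k)) :=
      lt_of_lt_of_le (by positivity) hpredk
    have hgapk := hgap k hk
    have hCΔ : C * Δ k ^ 2 ≤ (1 - α) * (θ * (ε / 2) * Δ k) := by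
      have h1 : C * Δ k ^ 2 ≤ C * (Δb * Δ k) := by
        have := mul_le_mul_of_nonneg_right hΔkb hΔk0.le
        calc C * Δ k ^ 2 = C * (Δ k * Δ k) := by ring
          _ ≤ C * (Δb * Δ k) := mul_le_mul_of_nonneg_left this hC0.le
      have h2 : C * (Δb * Δ k) = (1 - α) * (θ * (ε / 2) * Δ k) := by
        rw [hΔb]; field_simp
      linarith
    have h3 : (1 - α) * (θ * (ε / 2) * Δ k)
        ≤ (1 - α) * (h (F (x k)) - h (F (x k) + (A k).mulVec (d k))) :=
      mul_le_mul_of_nonneg_left hpredk hα1'.le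
    have hared : α * (h (F (x k)) - h (F (x k) + (A k).mulVec (d k)))
        ≤ h (F (x k)) - h (F (x k + d k)) := by linarith
    rw [hρe, le_div_iff₀ hpred0]
    linarith
  -- lower bound on trust region radii
  have hτ0n : τ 0 * Real.sqrt n = ε / (Lh * σ * cpm * cnp) := by
    rw [hτ0]
    field_simp
  have hΔbΔ0 : Δb ≤ Δ 0 := by
    refine le_trans ?_ hΔ0l
    rw [hτ0n, hΔb, hC]
    rw [div_le_div_iff₀ (by positivity) (by positivity)]
    have k1 : (1 - α) * θ ≤ 1 := by nlinarith
    have k2 : σ * cnp ≤ M * cnp ^ 2 := by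
      have b1 : cnp ≤ cnp ^ 2 := by nlinarith
      exact le_trans (mul_le_mul_of_nonneg_right hσM hcnp0.le)
        (mul_le_mul_of_nonneg_left b1 hM0.le)
    have k3 : (0:ℝ) ≤ ε * Lh * cpm := by positivity
    calc (1 - α) * θ * ε * (Lh * σ * cpm * cnp)
        = ((1 - α) * θ) * ((ε * Lh * cpm) * (σ * cnp)) := by ring
      _ ≤ 1 * ((ε * Lh * cpm) * (M * cnp ^ 2)) := by
          apply mul_le_mul k1 (mul_le_mul_of_nonneg_left k2 k3) (by positivity) one_pos.le
      _ ≤ ε * (2 * (Lh * M * cpm * cnp ^ 2)) := by nlinarith [k3, hM0, hcnp0, hε]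
  have hΔlb : ∀ k, Δb / 2 ≤ Δ k := by
    intro k
    induction k with
    | zero => linarith
    | succ k ih =>
      obtain ⟨hxΩ, hτk, hτΔ, hΔs⟩ := hinv k
      have hΔk0 : 0 < Δ k := hΔpos k
      rcases hstep' k with ⟨hk, _, hΔ', _⟩ | ⟨⟨hnp1, hρα⟩, _, hΔ', _⟩ |
        ⟨⟨hnp1, hρα, _⟩, _, hΔ', _⟩ | ⟨⟨hnp1, hρα, _⟩, _, hΔ', _⟩
      · rw [hΔ']; exact ih
      · rw [hΔ']; exact le_trans ih (le_min (by linarith) hΔs)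
      · rw [hΔ']
        have : Δb < Δ k := lt_of_not_ge fun hle => absurd (hcrit k hnp1 hle) (not_le.2 hρα)
        linarith
      · rw [hΔ']
        have : Δb < Δ k := lt_of_not_ge fun hle => absurd (hcrit k hnp1 hle) (not_le.2 hρα)
        linarith
  -- counting functions
  set c1 : ℕ → ℕ := fun K => ((Finset.range K).filter P1).card with hc1
  set cS : ℕ → ℕ := fun K => ((Finset.range K).filter PS).card with hcS
  set c2 : ℕ → ℕ := fun K => ((Finset.range K).filter P2).card with hc2
  set c3 : ℕ → ℕ := fun K => ((Finset.range K).filter P3).card with hc3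
  set c13 : ℕ → ℕ := fun K => ((Finset.range K).filter (fun j => P1 j ∨ P3 j)).card with hc13
  set c23 : ℕ → ℕ := fun K => ((Finset.range K).filter (fun j => P2 j ∨ P3 j)).card with hc23
  have hc1succ : ∀ K, c1 (K+1) = c1 K + (if P1 K then 1 else 0) := by
    intro K; simp only [hc1]; exact TRFDAux.count_succ _ K
  have hcSsucc : ∀ K, cS (K+1) = cS K + (if PS K then 1 else 0) := by
    intro K; simp only [hcS]; exact TRFDAux.count_succ _ K
  have hc2succ : ∀ K, c2 (K+1) = c2 K + (if P2 K then 1 else 0) := by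
    intro K; simp only [hc2]; exact TRFDAux.count_succ _ K
  have hc3succ : ∀ K, c3 (K+1) = c3 K + (if P3 K then 1 else 0) := by
    intro K; simp only [hc3]; exact TRFDAux.count_succ _ K
  have hc13succ : ∀ K, c13 (K+1) = c13 K + (if P1 K ∨ P3 K then 1 else 0) := by
    intro K; simp only [hc13]; exact TRFDAux.count_succ _ K
  have hc23succ : ∀ K, c23 (K+1) = c23 K + (if P2 K ∨ P3 K then 1 else 0) := by
    intro K; simp only [hc23]; exact TRFDAux.count_succ _ K
  -- exclusivity helpers
  have hexPS : ∀ k, PS k → ¬ P2 k ∧ ¬ P3 k := by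
    intro k hk
    exact ⟨fun hh => absurd hk.2 (not_le.2 hh.2.1), fun hh => absurd hk.2 (not_le.2 hh.2.1)⟩
  have hexP1 : ∀ k, P1 k → ¬ PS k ∧ ¬ P2 k ∧ ¬ P3 k := by
    intro k hk
    exact ⟨fun hh => hh.1 hk, fun hh => hh.1 hk, fun hh => hh.1 hk⟩
  -- τ formula
  have hτform : ∀ k, τ k = τ 0 * (1/2:ℝ) ^ (c13 k) := by
    intro k
    induction k with
    | zero => simp [hc13]
    | succ k ih =>
      rcases hstep' k with ⟨hk, _, _, hτ'⟩ | ⟨⟨hnp1, hρα⟩, _, _, hτ'⟩ |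
          ⟨⟨hnp1, hρα, hle⟩, _, _, hτ'⟩ | ⟨hk, _, _, hτ'⟩
      · rw [hτ', ih, hc13succ k, if_pos (Or.inl hk), pow_succ]; ring
      · have hnor : ¬ (P1 k ∨ P3 k) := by
          rintro (hh | hh)
          · exact hnp1 hh
          · exact absurd hρα (not_le.2 hh.2.1)
        rw [hτ', ih, hc13succ k, if_neg hnor, add_zero]
      · have hnor : ¬ (P1 k ∨ P3 k) := by
          rintro (hh | hh)
          · exact hnp1 hh
          · exact absurd hh.2.2 (not_lt.2 hle)
        rw [hτ', ih, hc13succ k, if_neg hnor, add_zero]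
      · rw [hτ', ih, hc13succ k, if_pos (Or.inr hk), pow_succ]; ring
  -- Δ growth/decay bookkeeping
  have hΔform : ∀ k, Δ k * (2:ℝ) ^ (c23 k) ≤ Δ 0 * (2:ℝ) ^ (cS k) := by
    intro k
    induction k with
    | zero => simp [hc23, hcS]
    | succ k ih =>
      have hp23 : (0:ℝ) < (2:ℝ) ^ (c23 k) := by positivity
      have hpS : (0:ℝ) < (2:ℝ) ^ (cS k) := by positivity
      have hΔk0 : 0 < Δ k := hΔpos k
      rcases hstep' k with ⟨hk, _, hΔ', _⟩ | ⟨hSk, _, hΔ', _⟩ |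
          ⟨hk, _, hΔ', _⟩ | ⟨hk, _, hΔ', _⟩
      · obtain ⟨hnS, hn2, hn3⟩ := hexP1 k hk
        rw [hΔ', hc23succ k, if_neg (by rintro (hh | hh); exacts [hn2 hh, hn3 hh]),
          hcSsucc k, if_neg hnS, add_zero, add_zero]
        exact ih
      · obtain ⟨hn2, hn3⟩ := hexPS k hSk
        rw [hΔ', hc23succ k, if_neg (by rintro (hh | hh); exacts [hn2 hh, hn3 hh]),
          hcSsucc k, if_pos hSk, add_zero, pow_succ]
        calc min (2 * Δ k) Δstar * (2:ℝ) ^ (c23 k) ≤ 2 * Δ k * (2:ℝ) ^ (c23 k) :=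
            mul_le_mul_of_nonneg_right (min_le_left _ _) hp23.le
          _ = 2 * (Δ k * (2:ℝ) ^ (c23 k)) := by ring
          _ ≤ 2 * (Δ 0 * (2:ℝ) ^ (cS k)) := by linarith
          _ = Δ 0 * ((2:ℝ) ^ (cS k) * 2) := by ring
      · have hnS : ¬ PS k := fun hh => absurd hh.2 (not_le.2 hk.2.1)
        rw [hΔ', hc23succ k, if_pos (Or.inl hk), hcSsucc k, if_neg hnS, add_zero, pow_succ]
        calc Δ k / 2 * ((2:ℝ) ^ (c23 k) * 2) = Δ k * (2:ℝ) ^ (c23 k) := by ring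
          _ ≤ _ := ih
      · have hnS : ¬ PS k := fun hh => absurd hh.2 (not_le.2 hk.2.1)
        rw [hΔ', hc23succ k, if_pos (Or.inr hk), hcSsucc k, if_neg hnS, add_zero, pow_succ]
        calc Δ k / 2 * ((2:ℝ) ^ (c23 k) * 2) = Δ k * (2:ℝ) ^ (c23 k) := by ring
          _ ≤ _ := ih
  -- objective decrease
  have hdec : ∀ k, h (F (x k)) + (cS k : ℝ) * δs ≤ h (F (x 0)) := by
    intro k
    induction k with
    | zero => simp [hcS]
    | succ k ih =>
      rcases hstep' k with ⟨hk, hx', _, _⟩ | ⟨hSk, hx', _, _⟩ |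
          ⟨hk, hx', _, _⟩ | ⟨hk, hx', _, _⟩
      · rw [hx', hcSsucc k, if_neg (hexP1 k hk).1, add_zero]; exact ih
      · have hnp1 := hSk.1
        have hρα := hSk.2
        obtain ⟨hdp, hdf, hθc, hρe, hη⟩ := hbr2 k hnp1
        have hΔk0 : 0 < Δ k := hΔpos k
        have hpredk := hpred k hnp1
        have hpred0 : 0 < h (F (x k)) - h (F (x k) + (A k).mulVec (d k)) :=
          lt_of_lt_of_le (by positivity) hpredk
        have hared : α * (h (F (x k)) - h (F (x k) + (A k).mulVec (d k)))
            ≤ h (F (x k)) - h (F (x k + d k)) := by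
          rw [hρe, le_div_iff₀ hpred0] at hρα
          linarith
        have hδsle : δs ≤ h (F (x k)) - h (F (x k + d k)) := by
          have l1 : δs = α * (θ * (ε / 2) * (Δb / 2)) := by
            rw [hδs, hΔb]; field_simp; ring
          have l2 : α * (θ * (ε / 2) * (Δb / 2)) ≤ α * (θ * (ε / 2) * Δ k) := by
            apply mul_le_mul_of_nonneg_left _ hα0.le
            apply mul_le_mul_of_nonneg_left (hΔlb k) (by positivity)
          have l3 : α * (θ * (ε / 2) * Δ k)
              ≤ α * (h (F (x k)) - h (F (x k) + (A k).mulVec (d k))) :=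
            mul_le_mul_of_nonneg_left hpredk hα0.le
          linarith
        rw [hx', hcSsucc k, if_pos hSk]
        push_cast
        linarith
      · have hnS : ¬ PS k := fun hh => absurd hh.2 (not_le.2 hk.2.1)
        rw [hx', hcSsucc k, if_neg hnS, add_zero]; exact ih
      · have hnS : ¬ PS k := fun hh => absurd hh.2 (not_le.2 hk.2.1)
        rw [hx', hcSsucc k, if_neg hnS, add_zero]; exact ih
  -- partition of the iterations
  have hpart : ∀ K, K = c1 K + cS K + c2 K + c3 K := by
    intro K
    induction K with
    | zero => simp [hc1, hcS, hc2, hc3]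
    | succ K ih =>
      rcases hstep' K with ⟨hk, _, _, _⟩ | ⟨hSk, _, _, _⟩ | ⟨hk, _, _, _⟩ | ⟨hk, _, _, _⟩
      · obtain ⟨hnS, hn2, hn3⟩ := hexP1 K hk
        rw [hc1succ K, if_pos hk, hcSsucc K, if_neg hnS, hc2succ K, if_neg hn2,
          hc3succ K, if_neg hn3]
        omega
      · obtain ⟨hn2, hn3⟩ := hexPS K hSk
        rw [hc1succ K, if_neg hSk.1, hcSsucc K, if_pos hSk, hc2succ K, if_neg hn2,
          hc3succ K, if_neg hn3]
        omega
      · have hnS : ¬ PS K := fun hh => absurd hh.2 (not_le.2 hk.2.1)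
        have hn3 : ¬ P3 K := fun hh => absurd hh.2.2 (not_lt.2 hk.2.2)
        rw [hc1succ K, if_neg hk.1, hcSsucc K, if_neg hnS, hc2succ K, if_pos hk,
          hc3succ K, if_neg hn3]
        omega
      · have hnS : ¬ PS K := fun hh => absurd hh.2 (not_le.2 hk.2.1)
        have hn2 : ¬ P2 K := fun hh => absurd hh.2.2 (not_le.2 hk.2.2)
        rw [hc1succ K, if_neg hk.1, hcSsucc K, if_neg hnS, hc2succ K, if_neg hn2,
          hc3succ K, if_pos hk]
        omega
  -- lower bound on τ at type-I iterations before T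
  have hτlow : ∀ k, k < T → P1 k → ε / (Lh * M * cpm * cnp * Real.sqrt n) < τ k := by
    intro k hkT hkP1
    obtain ⟨hxΩ, hτk, hτΔ, hΔs⟩ := hinv k
    have hψ := hT k hkT
    have hcmp := H.modelInf_compare hxΩ hΔs0.le (J (x k)) (A k)
    have hop : opNorm2 (J (x k) - A k) ≤ Real.sqrt n * (LJ / 2 * τ k) := by
      rw [opNorm2_sub_comm]
      have h0 := TRFDAux.fd_error F J LJ hLJ.le htaylor (x k) hτk
      rw [← hA k] at h0
      exact h0
    have hψη : psi Ω F h J p Δstar (x k) ≤ eta Ω F h p Δstar (x k) (A k)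
        + Lh * (cpm * (Real.sqrt n * (LJ / 2 * τ k) * cnp)) := by
      rw [TRFDAux.psi_eq, TRFDAux.eta_eq]
      have hstep1 : h (F (x k)) - TRFDAux.modelInf Ω F h p (J (x k)) (x k) Δstar
          ≤ h (F (x k)) - TRFDAux.modelInf Ω F h p (A k) (x k) Δstar
            + Lh * (cpm * (Real.sqrt n * (LJ / 2 * τ k) * cnp)) * Δstar := by
        have hmono : Lh * (cpm * (opNorm2 (J (x k) - A k) * (cnp * Δstar)))
            ≤ Lh * (cpm * (Real.sqrt n * (LJ / 2 * τ k) * cnp)) * Δstar := by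
          have := mul_le_mul_of_nonneg_right hop
            (by positivity : (0:ℝ) ≤ Lh * cpm * cnp * Δstar)
          nlinarith [this]
        linarith
      have h2 := mul_le_mul_of_nonneg_left hstep1 (inv_nonneg.2 hΔs0.le)
      calc Δstar⁻¹ * (h (F (x k)) - TRFDAux.modelInf Ω F h p (J (x k)) (x k) Δstar)
          ≤ Δstar⁻¹ * (h (F (x k)) - TRFDAux.modelInf Ω F h p (A k) (x k) Δstar
            + Lh * (cpm * (Real.sqrt n * (LJ / 2 * τ k) * cnp)) * Δstar) := h2
        _ = Δstar⁻¹ * (h (F (x k)) - TRFDAux.modelInf Ω F h p (A k) (x k) Δstar)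
            + Lh * (cpm * (Real.sqrt n * (LJ / 2 * τ k) * cnp)) := by
            field_simp
    have hη : eta Ω F h p Δstar (x k) (A k) < ε / 2 := hkP1
    have hbig : ε < ε / 2 + Lh * (cpm * (Real.sqrt n * (LJ / 2 * τ k) * cnp)) := by
      linarith
    rw [div_lt_iff₀ (by positivity)]
    have hM' : Lh * cpm * Real.sqrt n * cnp * τ k * (M - LJ) ≥ 0 := by
      have : 0 ≤ M - LJ := by linarith
      positivity
    nlinarith [hbig, hM']
  -- bound on the number of type-I iterations
  have hτlow_eq : ε / (Lh * M * cpm * cnp * Real.sqrt n) = τ 0 * (σ / M) := by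
    rw [hτ0]
    field_simp
  have hc1T : (c1 T : ℝ) ≤ Real.logb 2 (M / σ) + 1 := by
    have hlogMσ : 0 ≤ Real.logb 2 (M / σ) :=
      Real.logb_nonneg (by norm_num) ((one_le_div hσ).2 hσM)
    by_cases hne : ((Finset.range T).filter P1).Nonempty
    · set k := ((Finset.range T).filter P1).max' hne with hk
      have hkmem : k ∈ (Finset.range T).filter P1 := Finset.max'_mem _ hne
      have hkT : k < T := Finset.mem_range.1 (Finset.mem_of_mem_filter _ hkmem)
      have hkP1 : P1 k := (Finset.mem_filter.1 hkmem).2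
      have hτk := hτlow k hkT hkP1
      rw [hτlow_eq, hτform k] at hτk
      have h5 : σ / M < (1/2:ℝ) ^ (c13 k) := (mul_lt_mul_iff_right₀ hτ00).1 hτk
      have h6 : (2:ℝ) ^ (c13 k) < M / σ := by
        have hpow : (0:ℝ) < (2:ℝ) ^ (c13 k) := by positivity
        have h51 : σ / M < ((2:ℝ) ^ (c13 k))⁻¹ := by
          rwa [show ((1:ℝ)/2) = (2:ℝ)⁻¹ by norm_num, inv_pow] at h5
        rw [div_lt_iff₀ hM0] at h51
        rw [lt_div_iff₀ hσ]
        calc (2:ℝ) ^ (c13 k) * σ < (2:ℝ) ^ (c13 k) * (((2:ℝ) ^ (c13 k))⁻¹ * M) :=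
            mul_lt_mul_of_pos_left h51 hpow
          _ = M := by field_simp
      have h7 : ((c13 k : ℕ) : ℝ) ≤ Real.logb 2 (M / σ) := by
        rw [Real.le_logb_iff_rpow_le (by norm_num) (by positivity), Real.rpow_natCast]
        exact h6.le
      have h8 : c1 T ≤ c13 k + 1 := by
        have hsub : (Finset.range T).filter P1
            ⊆ insert k ((Finset.range k).filter (fun j => P1 j ∨ P3 j)) := by
          intro j hj
          rcases eq_or_ne j k with rfl | hne'
          · exact Finset.mem_insert_self _ _
          · apply Finset.mem_insert_of_mem
            refine Finset.mem_filter.2 ⟨Finset.mem_range.2 ?_,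
              Or.inl (Finset.mem_filter.1 hj).2⟩
            exact lt_of_le_of_ne (Finset.le_max' _ j hj) hne'
        calc c1 T ≤ (insert k ((Finset.range k).filter (fun j => P1 j ∨ P3 j))).card :=
            Finset.card_le_card hsub
          _ ≤ c13 k + 1 := by
              exact Finset.card_insert_le k ((Finset.range k).filter
                (fun j => P1 j ∨ P3 j))
      calc (c1 T : ℝ) ≤ (c13 k : ℝ) + 1 := by exact_mod_cast h8
        _ ≤ Real.logb 2 (M / σ) + 1 := by linarith
    · have hzero : c1 T = 0 := by
        simp only [hc1]
        rw [Finset.not_nonempty_iff_eq_empty.1 hne]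
        rfl
      rw [hzero]
      push_cast
      linarith
  -- second term dominates the number of type-I iterations
  have ht2 : Real.logb 2 (M / σ) + 2
      ≤ (⌈|Real.logb 2 (4 * M * cnp / (σ * (1 - α) * θ))|⌉ : ℝ) := by
    have hfac : 4 * M * cnp / (σ * (1 - α) * θ) = (4 * (M / σ)) * (cnp / ((1 - α) * θ)) := by
      field_simp
    have hge1 : 1 ≤ cnp / ((1 - α) * θ) := by
      rw [le_div_iff₀ (by positivity)]
      nlinarith
    have harg : 4 * (M / σ) ≤ 4 * M * cnp / (σ * (1 - α) * θ) := by
      rw [hfac]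
      nlinarith [hge1, (by positivity : (0:ℝ) < 4 * (M / σ))]
    have hlog4 : Real.logb 2 (4 * (M / σ)) = 2 + Real.logb 2 (M / σ) := by
      have hne1 : (4:ℝ) ≠ 0 := by norm_num
      have hne2 : (M / σ) ≠ 0 := by positivity
      rw [Real.logb_mul hne1 hne2]
      congr 1
      rw [Real.logb, show (4:ℝ) = 2 ^ (2:ℕ) by norm_num, Real.log_pow]
      have : Real.log 2 ≠ 0 := ne_of_gt (Real.log_pos (by norm_num))
      field_simp
      norm_num
    have hmono : Real.logb 2 (4 * (M / σ)) ≤ Real.logb 2 (4 * M * cnp / (σ * (1 - α) * θ)) :=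
      Real.logb_le_logb_of_le (by norm_num) (by positivity) harg
    have habs : Real.logb 2 (4 * M * cnp / (σ * (1 - α) * θ))
        ≤ (⌈|Real.logb 2 (4 * M * cnp / (σ * (1 - α) * θ))|⌉ : ℝ) :=
      le_trans (le_abs_self _) (Int.le_ceil _)
    linarith
  -- bound on the number of type-II/III iterations
  have hc23eq : c23 T = c2 T + c3 T := by
    simp only [hc23, hc2, hc3]
    rw [Finset.filter_or]
    rw [Finset.card_union_of_disjoint]
    rw [Finset.disjoint_left]
    intro j hj hj'
    exact absurd ((Finset.mem_filter.1 hj').2).2.2 (not_lt.2 ((Finset.mem_filter.1 hj).2).2.2)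
  have hc23T : (c2 T : ℝ) + (c3 T : ℝ) ≤ (cS T : ℝ)
      + Real.logb 2 (4 * Lh * M * cpm * cnp ^ 2 * Δ 0 / ((1 - α) * θ) / ε) := by
    have h1 : (Δb / 2) * (2:ℝ) ^ (c23 T) ≤ Δ 0 * (2:ℝ) ^ (cS T) :=
      le_trans (mul_le_mul_of_nonneg_right (hΔlb T) (by positivity)) (hΔform T)
    have h2 : (2:ℝ) ^ (c23 T) ≤ (2 * Δ 0 / Δb) * (2:ℝ) ^ (cS T) := by
      calc (2:ℝ) ^ (c23 T) = (Δb / 2) * (2:ℝ) ^ (c23 T) * (2 / Δb) := by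
            field_simp
        _ ≤ Δ 0 * (2:ℝ) ^ (cS T) * (2 / Δb) :=
            mul_le_mul_of_nonneg_right h1 (by positivity)
        _ = (2 * Δ 0 / Δb) * (2:ℝ) ^ (cS T) := by ring
    have h3 : ((c23 T : ℕ) : ℝ) ≤ Real.logb 2 ((2 * Δ 0 / Δb) * (2:ℝ) ^ (cS T)) := by
      rw [Real.le_logb_iff_rpow_le (by norm_num) (by positivity), Real.rpow_natCast]
      exact h2
    have h4 : Real.logb 2 ((2 * Δ 0 / Δb) * (2:ℝ) ^ (cS T))
        = Real.logb 2 (2 * Δ 0 / Δb) + (cS T : ℝ) := by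
      have hne1 : (2 * Δ 0 / Δb) ≠ 0 := by positivity
      have hne2 : ((2:ℝ) ^ (cS T)) ≠ 0 := by positivity
      rw [Real.logb_mul hne1 hne2]
      congr 1
      rw [← Real.rpow_natCast 2 (cS T)]
      exact Real.logb_rpow (by norm_num) (by norm_num)
    have harg : 2 * Δ 0 / Δb = 4 * Lh * M * cpm * cnp ^ 2 * Δ 0 / ((1 - α) * θ) / ε := by
      rw [hΔb, hC]
      field_simp
      ring
    rw [harg] at h3 h4
    have h5 : ((c2 T : ℕ) : ℝ) + ((c3 T : ℕ) : ℝ) = ((c23 T : ℕ) : ℝ) := by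
      rw [hc23eq]; push_cast; ring
    rw [h5]
    rw [h4] at h3
    linarith
  -- success count bound
  have hSb : (cS T : ℝ) * δs ≤ h (F (x 0)) - flow := by
    have := hdec T
    have := hflow (x T)
    linarith
  have h2S : 2 * (cS T : ℝ)
      ≤ 16 * Lh * M * cpm * cnp ^ 2 * (h (F (x 0)) - flow) / (α * (1 - α) * θ ^ 2) / ε ^ 2 := by
    have hq : (cS T : ℝ) ≤ (h (F (x 0)) - flow) / δs := by
      rw [le_div_iff₀ hδs0]
      exact hSb
    have hid : 2 * ((h (F (x 0)) - flow) / δs)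
        = 16 * Lh * M * cpm * cnp ^ 2 * (h (F (x 0)) - flow) / (α * (1 - α) * θ ^ 2) / ε ^ 2 := by
      rw [hδs, hC]
      field_simp
      ring
    linarith
  -- final assembly
  have hcast : (T : ℝ) = (c1 T : ℝ) + (cS T : ℝ) + (c2 T : ℝ) + (c3 T : ℝ) := by
    exact_mod_cast hpart T
  rw [hcast]
  linarith [hc1T, ht2, hc23T, h2S]
end
end

section
/- Assume each component F_i is convex, h is monotone, and f has a global minimizer x* on Ω with D_0 := sup{‖x − x*‖_p : x ∈ Ω, f(x) ≤ f(x_0)} < ∞, for some fixed x_0 ∈ Ω. Then for every x ∈ Ω with f(x) ≤ f(x_0) and every r ≥ D_0, one has ψ_{p,r}(x) ≥ (f(x) − f(x*)) / r. -/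
open scoped ENNReal

noncomputable section

private lemma abs_le_pNorm {n : ℕ} (p : ℝ≥0∞) (hp : 1 ≤ p) (x : Fin n → ℝ) (i : Fin n) :
    |x i| ≤ pNorm p x := by
  unfold pNorm
  split_ifs with h
  · exact le_ciSup (f := fun j => |x j|) (Set.Finite.bddAbove (Set.finite_range _)) i
  · have hq : 1 ≤ p.toReal := by simpa using ENNReal.toReal_mono h hp
    have hq0 : 0 < p.toReal := lt_of_lt_of_le one_pos hq
    have h1 : |x i| ^ p.toReal ≤ ∑ j, |x j| ^ p.toReal :=
      Finset.single_le_sum (fun j _ => Real.rpow_nonneg (abs_nonneg _) _) (Finset.mem_univ i)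
    calc |x i| = (|x i| ^ p.toReal) ^ (1 / p.toReal) := by
          rw [one_div, Real.rpow_rpow_inv (abs_nonneg _) hq0.ne']
      _ ≤ (∑ j, |x j| ^ p.toReal) ^ (1 / p.toReal) :=
          Real.rpow_le_rpow (Real.rpow_nonneg (abs_nonneg _) _) h1 (by positivity)

private lemma pNorm_neg {n : ℕ} (p : ℝ≥0∞) (x : Fin n → ℝ) : pNorm p (-x) = pNorm p x := by
  unfold pNorm
  simp

private lemma grad_ineq {n m : ℕ} (F : (Fin n → ℝ) → (Fin m → ℝ))
    (J : (Fin n → ℝ) → Matrix (Fin m) (Fin n) ℝ)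
    (hJ : ∀ y, HasFDerivAt F (LinearMap.toContinuousLinearMap (Matrix.mulVecLin (J y))) y)
    (hFconv : ∀ i, ConvexOn ℝ Set.univ (fun y => F y i))
    (x xstar : Fin n → ℝ) (i : Fin m) :
    F x i + (J x).mulVec (xstar - x) i ≤ F xstar i := by
  set v := xstar - x with hv
  have h1 : HasDerivAt (fun t : ℝ => x + t • v) v 0 := by
    simpa using ((hasDerivAt_id (0:ℝ)).smul_const v).const_add x
  have h2 : HasDerivAt (fun t : ℝ => F (x + t • v)) ((J x).mulVec v) 0 := by
    have := (hJ (x + (0:ℝ) • v)).comp_hasDerivAt 0 h1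
    simpa [Function.comp_def] using this
  have h3 : HasDerivAt (fun t : ℝ => F (x + t • v) i) ((J x).mulVec v i) 0 :=
    hasDerivAt_pi.mp h2 i
  have hconv : ConvexOn ℝ Set.univ (fun t : ℝ => F (x + t • v) i) := by
    have := (hFconv i).comp_affineMap (AffineMap.lineMap x xstar : ℝ →ᵃ[ℝ] (Fin n → ℝ))
    have he : (fun t : ℝ => F (x + t • v) i) =
        (fun y => F y i) ∘ (AffineMap.lineMap x xstar : ℝ →ᵃ[ℝ] (Fin n → ℝ)) := by
      funext t
      simp [AffineMap.lineMap_apply, hv, add_comm]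
    rw [he]
    simpa using this
  have h4 := hconv.le_slope_of_hasDerivAt (Set.mem_univ 0) (Set.mem_univ 1) one_pos h3
  rw [slope_def_field] at h4
  simp at h4
  have hx1 : x + v = xstar := by simp [hv]
  rw [hx1] at h4
  linarith

theorem stmt14
    {n m : ℕ} (hn : 1 ≤ n) (hm : 1 ≤ m) (p : ℝ≥0∞) (hp : 1 ≤ p)
    (Ω : Set (Fin n → ℝ)) (hΩne : Ω.Nonempty) (hΩcl : IsClosed Ω) (hΩcv : Convex ℝ Ω)
    (F : (Fin n → ℝ) → (Fin m → ℝ)) (J : (Fin n → ℝ) → Matrix (Fin m) (Fin n) ℝ)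
    (hJ : ∀ y, HasFDerivAt F (LinearMap.toContinuousLinearMap (Matrix.mulVecLin (J y))) y)
    (LJ : ℝ) (hLJ : 0 < LJ)
    (hJLip : ∀ y z, opNorm2 (J y - J z) ≤ LJ * eucNorm (y - z))
    (h : (Fin m → ℝ) → ℝ) (hcont : Continuous h)
    (hFconv : ∀ i, ConvexOn ℝ Set.univ (fun y => F y i))
    (hmono : ∀ u v : Fin m → ℝ, (∀ i, u i ≤ v i) → h u ≤ h v)
    (x₀ : Fin n → ℝ) (hx₀ : x₀ ∈ Ω)
    (xstar : Fin n → ℝ) (hxstarΩ : xstar ∈ Ω)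
    (hxstarmin : ∀ y ∈ Ω, h (F xstar) ≤ h (F y))
    (D₀ : ℝ) (hD₀ : ∀ y ∈ Ω, h (F y) ≤ h (F x₀) → pNorm p (y - xstar) ≤ D₀) :
    ∀ x ∈ Ω, h (F x) ≤ h (F x₀) → ∀ r : ℝ, D₀ ≤ r →
      (h (F x) - h (F xstar)) / r ≤ psi Ω F h J p r x := by
  intro x hx hfx r hr
  -- nonnegativity of pNorm and hence of r
  have hpN0 : 0 ≤ pNorm p (x - xstar) :=
    le_trans (abs_nonneg _) (abs_le_pNorm p hp (x - xstar) ⟨0, hn⟩)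
  have hr0 : 0 ≤ r := le_trans (le_trans hpN0 (hD₀ x hx hfx)) hr
  rcases eq_or_lt_of_le hr0 with hrz | hrpos
  · simp [psi, ← hrz]
  -- the candidate step
  set s₀ : Fin n → ℝ := xstar - x with hs₀
  have hxs : x + s₀ ∈ Ω := by
    have : x + s₀ = xstar := by simp [hs₀]
    rw [this]; exact hxstarΩ
  have hs₀norm : pNorm p s₀ ≤ r := by
    have : s₀ = -(x - xstar) := by simp [hs₀]
    rw [this, pNorm_neg]
    exact le_trans (hD₀ x hx hfx) hr
  set S : Set (Fin n → ℝ) := {s | x + s ∈ Ω ∧ pNorm p s ≤ r} with hS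
  set g : (Fin n → ℝ) → ℝ := fun s => h (F x + (J x).mulVec s) with hg
  have hmem : g s₀ ∈ g '' S := Set.mem_image_of_mem g ⟨hxs, hs₀norm⟩
  -- boundedness below of the image
  have hSsub : S ⊆ Metric.closedBall 0 r := by
    intro s hs
    rw [Metric.mem_closedBall, dist_zero_right]
    rw [pi_norm_le_iff_of_nonneg hr0]
    intro i
    calc ‖s i‖ = |s i| := rfl
      _ ≤ pNorm p s := abs_le_pNorm p hp s i
      _ ≤ r := hs.2
  have hgcont : Continuous g := by
    apply hcont.comp
    exact continuous_const.add ((Matrix.mulVecLin (J x)).toContinuousLinearMap.continuous)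
  have hbdd : BddBelow (g '' S) := by
    have hK : IsCompact (g '' Metric.closedBall 0 r) :=
      (isCompact_closedBall _ _).image hgcont
    exact (hK.bddBelow).mono (Set.image_mono (f := g) hSsub)
  -- the key bound : g s₀ ≤ h (F xstar)
  have hkey : g s₀ ≤ h (F xstar) := by
    apply hmono
    intro i
    simpa using grad_ineq F J hJ hFconv x xstar i
  have hinf : sInf (g '' S) ≤ h (F xstar) := le_trans (csInf_le hbdd hmem) hkey
  -- conclude
  have : (h (F x) - h (F xstar)) / r ≤ r⁻¹ * (h (F x) - sInf (g '' S)) := by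
    rw [div_eq_inv_mul]
    apply mul_le_mul_of_nonneg_left (by linarith) (inv_nonneg.mpr hr0)
  exact this
end
end
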